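/- Let n̄, u, s̄, k be positive integers with n = n̄·u and k < n, and set r = n − k. Let 𝔽 be a finite field with |𝔽| ≥ n·s̄ + 1 and with u dividing |𝔽| − 1, let ξ be a generator of 𝔽ˣ, let θ ∈ 𝔽 have multiplicative order u, and set λ_{i,j} = ξ^{i·s̄+j}. Suppose c : {0,…,n−1} × {0,…,s̄^n̄ − 1} → 𝔽 satisfies, for every t ∈ {0,…,r−1} and every a ∈ {0,…,s̄^n̄ − 1} with s̄-ary digits (a_{n̄−1},…,a₀), the parity-check equation ∑_{i=0}^{n̄−1} ∑_{g=0}^{u−1} θ^{g·t}·λ_{i,a_i}^t·c(i·u+g, a) = 0. If there exists a set K ⊆ {0,…,n−1} with |K| = k such that c(j,a) = 0 for all j ∈ K and all a, then c is identically zero. -/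

import Mathlib

set_option maxHeartbeats 1000000

private lemma sum_range_mul_aux {M : Type*} [AddCommMonoid M] (f : ℕ → M) (m u : ℕ) :
    ∑ j ∈ Finset.range (m * u), f j
      = ∑ i ∈ Finset.range m, ∑ g ∈ Finset.range u, f (i * u + g) := by
  induction m with
  | zero => simp
  | succ m ih =>
    rw [Finset.sum_range_succ, ← ih, show (m + 1) * u = m * u + u by ring,
      Finset.range_eq_Ico,
      ← Finset.sum_Ico_consecutive f (Nat.zero_le (m * u)) (Nat.le_add_right (m * u) u)]
    congr 1
    · rw [Finset.sum_Ico_eq_sum_range]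
      simp
    · rw [Finset.sum_Ico_eq_sum_range, Nat.add_sub_cancel_left]

private lemma pow_inj_aux {𝔽 : Type*} [Field 𝔽] (x : 𝔽) (hx : x ≠ 0) :
    ∀ A B : ℕ, A < orderOf x → B < orderOf x → x ^ A = x ^ B → A = B := by
  have main : ∀ A B : ℕ, B ≤ A → A < orderOf x → x ^ A = x ^ B → A = B := by
    intro A B hBA hA hAB
    have h6 : x ^ (A - B) = 1 :=
      mul_left_cancel₀ (pow_ne_zero B hx)
        (by rw [← pow_add, Nat.add_sub_cancel' hBA, hAB, mul_one])
    have h7 := Nat.eq_zero_of_dvd_of_lt (orderOf_dvd_of_pow_eq_one h6) (by omega)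
    omega
  intro A B hA hB hAB
  rcases le_total B A with h | h
  · exact main A B h hA hAB
  · exact (main B A h hB hAB.symm).symm

/-- **MDS property of the array code `C`** constructed in equations (6)–(8) of the
paper: a codeword of the code of length `n = nbar·u` and sub-packetization `sbar^nbar`
(defined by the parity-check equations below, where `a_i = a / sbar^i % sbar` is the
`i`-th `sbar`-ary digit of `a`) which vanishes on some `k` nodes is identically zero. -/
theorem stmt9 {𝔽 : Type*} [Field 𝔽] [Fintype 𝔽]
    (nbar u sbar k n r : ℕ)
    (hnbar : 0 < nbar) (hu : 0 < u) (hsbar : 0 < sbar) (hk : 0 < k)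
    (hn : n = nbar * u) (hkn : k < n) (hr : r = n - k)
    (hcard : n * sbar + 1 ≤ Fintype.card 𝔽) (hdvd : u ∣ Fintype.card 𝔽 - 1)
    (ξ θ : 𝔽) (hξ : orderOf ξ = Fintype.card 𝔽 - 1) (hθ : orderOf θ = u)
    (c : ℕ → ℕ → 𝔽)
    (hc : ∀ t < r, ∀ a < sbar ^ nbar,
      ∑ i ∈ Finset.range nbar, ∑ g ∈ Finset.range u,
        θ ^ (g * t) * (ξ ^ (i * sbar + a / sbar ^ i % sbar)) ^ t * c (i * u + g) a = 0)
    (K : Finset ℕ) (hK : K ⊆ Finset.range n) (hKcard : K.card = k)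
    (hzero : ∀ j ∈ K, ∀ a < sbar ^ nbar, c j a = 0) :
    ∀ j < n, ∀ a < sbar ^ nbar, c j a = 0 := by
  intro j hj a ha
  have hnpos : 0 < n := lt_trans hk hkn
  have hns1 : 1 ≤ n * sbar := Nat.mul_pos hnpos hsbar
  have hns : n * sbar ≤ Fintype.card 𝔽 - 1 := by omega
  have hq1 : 1 ≤ Fintype.card 𝔽 - 1 := by omega
  have hξ0 : ξ ≠ 0 := by
    intro h
    have h1 := pow_orderOf_eq_one ξ
    rw [hξ] at h1
    rw [h, zero_pow (by omega)] at h1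
    exact zero_ne_one h1
  set E : ℕ → ℕ := fun j => j / u * sbar + a / sbar ^ (j / u) % sbar with hE
  set μ : ℕ → 𝔽 := fun j => θ ^ (j % u) * ξ ^ E j with hμdef
  have hEbound : ∀ j < n, E j < nbar * sbar := by
    intro j hjn
    have hi : j / u < nbar := by
      rw [hn] at hjn
      exact Nat.div_lt_of_lt_mul (by rwa [mul_comm] at hjn)
    have hd : a / sbar ^ (j / u) % sbar < sbar := Nat.mod_lt _ hsbar
    have h1 : E j < (j / u + 1) * sbar := by
      simp only [hE]
      rw [add_one_mul]
      exact Nat.add_lt_add_left hd _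
    exact lt_of_lt_of_le h1 (Nat.mul_le_mul (Nat.succ_le_of_lt hi) le_rfl)
  -- step A: the parity checks in terms of μ
  have heq : ∀ t < r, ∑ j ∈ Finset.range n, μ j ^ t * c j a = 0 := by
    intro t ht
    have h0 := hc t ht a ha
    rw [hn, sum_range_mul_aux, ← h0]
    refine Finset.sum_congr rfl fun i hi => Finset.sum_congr rfl fun g hg => ?_
    have hglt : g < u := Finset.mem_range.mp hg
    have hdiv : (i * u + g) / u = i := by
      rw [add_comm, Nat.add_mul_div_right _ _ hu, Nat.div_eq_of_lt hglt, zero_add]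
    have hmod : (i * u + g) % u = g := by
      rw [add_comm, Nat.add_mul_mod_self_right, Nat.mod_eq_of_lt hglt]
    simp only [hμdef, hE, hdiv, hmod]
    rw [mul_pow, ← pow_mul]
  -- step B: injectivity of μ on range n
  have hμinj : ∀ j < n, ∀ j' < n, μ j = μ j' → j = j' := by
    intro j hjn j' hj'n hμeq
    have hθu : θ ^ u = 1 := by rw [← hθ]; exact pow_orderOf_eq_one θ
    have h2 : ξ ^ (E j * u) = ξ ^ (E j' * u) := by
      have h3 := congrArg (· ^ u) hμeq
      simp only [hμdef] at h3
      rw [mul_pow, mul_pow, ← pow_mul, ← pow_mul, ← pow_mul, ← pow_mul,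
        mul_comm (j % u) u, mul_comm (j' % u) u, pow_mul θ, pow_mul θ, hθu,
        one_pow, one_pow, one_mul, one_mul] at h3
      exact h3
    have hbE : ∀ x < n, E x * u < Fintype.card 𝔽 - 1 := by
      intro x hx
      have h4 : E x * u < nbar * sbar * u := mul_lt_mul_of_pos_right (hEbound x hx) hu
      have h5 : nbar * sbar * u = n * sbar := by rw [hn]; ring
      omega
    have hEeq : E j = E j' := by
      have h6 := pow_inj_aux ξ hξ0 (E j * u) (E j' * u)
        (by rw [hξ]; exact hbE j hjn) (by rw [hξ]; exact hbE j' hj'n) h2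
      exact Nat.eq_of_mul_eq_mul_right hu h6
    have hij : j / u = j' / u := by
      have h1 : E j / sbar = j / u := by
        simp only [hE]
        rw [add_comm, Nat.add_mul_div_right _ _ hsbar,
          Nat.div_eq_of_lt (Nat.mod_lt _ hsbar), zero_add]
      have h2' : E j' / sbar = j' / u := by
        simp only [hE]
        rw [add_comm, Nat.add_mul_div_right _ _ hsbar,
          Nat.div_eq_of_lt (Nat.mod_lt _ hsbar), zero_add]
      rw [← h1, ← h2', hEeq]
    have hθ0 : θ ≠ 0 := by
      intro h
      have h1 := pow_orderOf_eq_one θ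
      rw [hθ] at h1
      rw [h, zero_pow (by omega)] at h1
      exact zero_ne_one h1
    have hθeq : θ ^ (j % u) = θ ^ (j' % u) := by
      have h8 := hμeq
      simp only [hμdef] at h8
      rw [← hEeq] at h8
      exact mul_right_cancel₀ (pow_ne_zero _ hξ0) h8
    have hgg : j % u = j' % u :=
      pow_inj_aux θ hθ0 _ _ (by rw [hθ]; exact Nat.mod_lt _ hu)
        (by rw [hθ]; exact Nat.mod_lt _ hu) hθeq
    have hmul : u * (j / u) = u * (j' / u) := by rw [hij]
    have d1 := Nat.div_add_mod j u
    have d2 := Nat.div_add_mod j' u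
    omega
  -- step C: Vandermonde
  set S : Finset ℕ := Finset.range n \ K with hS
  have hScard : S.card = r := by
    rw [hS, Finset.card_sdiff_of_subset hK, Finset.card_range, hKcard, hr]
  set f : Fin r → ℕ := fun i => S.orderEmbOfFin hScard i with hf
  have hfmem : ∀ i, f i ∈ S := fun i => Finset.orderEmbOfFin_mem S hScard i
  have hfn : ∀ i, f i < n := by
    intro i
    have h10 := hfmem i
    rw [hS, Finset.mem_sdiff, Finset.mem_range] at h10
    exact h10.1
  have hfinj : Function.Injective f := (S.orderEmbOfFin hScard).injective
  have hwinj : Function.Injective (fun i => μ (f i)) := by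
    intro x y hxy
    exact hfinj (hμinj (f x) (hfn x) (f y) (hfn y) hxy)
  have hsumS : ∀ t < r, ∑ x ∈ S, μ x ^ t * c x a = 0 := by
    intro t ht
    have hsplit := Finset.sum_sdiff (f := fun x => μ x ^ t * c x a) hK
    have hKzero : ∑ x ∈ K, μ x ^ t * c x a = 0 :=
      Finset.sum_eq_zero fun x hx => by rw [hzero x hx a ha, mul_zero]
    rw [hKzero, add_zero, ← hS] at hsplit
    rw [hsplit]
    exact heq t ht
  have hsum' : ∀ (F : ℕ → 𝔽), ∑ x ∈ S, F x = ∑ i : Fin r, F (f i) := by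
    intro F
    rw [← Finset.sum_coe_sort S F]
    refine (Fintype.sum_equiv (S.orderIsoOfFin hScard).toEquiv _ _ fun i => ?_).symm
    simp only [hf]
    exact congrArg F (Finset.coe_orderIsoOfFin_apply S hScard i).symm
  have hv : (fun i : Fin r => c (f i) a) = 0 := by
    apply Matrix.eq_zero_of_forall_pow_sum_mul_pow_eq_zero hwinj
    intro t
    have h11 := hsumS t t.2
    rw [hsum' (fun x => μ x ^ (t : ℕ) * c x a)] at h11
    rw [← h11]
    exact Finset.sum_congr rfl fun i _ => by ring
  by_cases hjK : j ∈ K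
  · exact hzero j hjK a ha
  · have hjS : j ∈ S := by rw [hS, Finset.mem_sdiff, Finset.mem_range]; exact ⟨hj, hjK⟩
    have hrange : j ∈ Set.range f := by
      simp only [hf]
      rw [Finset.range_orderEmbOfFin S hScard]
      exact hjS
    obtain ⟨i, hi⟩ := hrange
    have h12 := congrFun hv i
    rw [hi] at h12
    exact h12
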